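/- Two equal disks cannot cover a third equal disk with a different center: let r > 0 and let a, b, c be points of the Euclidean plane. If the closed disk of radius r centered at c is contained in the union of the closed disks of radius r centered at a and at b, then c = a or c = b. -/

import Mathlib

open Metric RealInnerProductSpace

-- auxiliary: a direction making an obtuse/right angle with two given vectors in the plane
lemma exists_dir (v w : EuclideanSpace ℝ (Fin 2)) (hv : v ≠ 0) :
    ∃ u : EuclideanSpace ℝ (Fin 2), u ≠ 0 ∧ ⟪u, v⟫ ≤ 0 ∧ ⟪u, w⟫ ≤ 0 := by
  by_cases hpar : ‖w‖ • v + ‖v‖ • w = 0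
  · -- antiparallel case: take a vector perpendicular to `v`
    refine ⟨(WithLp.equiv 2 (Fin 2 → ℝ)).symm ![-(v 1), v 0], ?_, ?_, ?_⟩
    · intro h0
      apply hv
      have h1 : (![-(v 1), v 0] : Fin 2 → ℝ) = 0 := by
        have := congrArg (WithLp.equiv 2 (Fin 2 → ℝ)) h0
        simpa using this
      have e0 : -(v 1) = 0 := congrFun h1 0
      have e1 : v 0 = 0 := congrFun h1 1
      ext i
      fin_cases i <;> simp_all
    · have : ⟪(WithLp.equiv 2 (Fin 2 → ℝ)).symm ![-(v 1), v 0], v⟫ = 0 := by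
        simp [PiLp.inner_apply, Fin.sum_univ_two]
        ring
      exact le_of_eq this
    · have hinv : ⟪(WithLp.equiv 2 (Fin 2 → ℝ)).symm ![-(v 1), v 0], v⟫ = 0 := by
        simp [PiLp.inner_apply, Fin.sum_univ_two]
        ring
      have hw : ‖v‖ • w = -(‖w‖ • v) := eq_neg_of_add_eq_zero_right hpar
      have : ‖v‖ * ⟪(WithLp.equiv 2 (Fin 2 → ℝ)).symm ![-(v 1), v 0], w⟫ = 0 := by
        rw [← real_inner_smul_right, hw, inner_neg_right, real_inner_smul_right, hinv]
        ring
      have hv' : ‖v‖ ≠ 0 := norm_ne_zero_iff.mpr hv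
      exact le_of_eq ((mul_eq_zero.mp this).resolve_left hv')
  · refine ⟨-(‖w‖ • v + ‖v‖ • w), neg_ne_zero.mpr hpar, ?_, ?_⟩
    · rw [inner_neg_left, neg_nonpos]
      rw [inner_add_left, real_inner_smul_left, real_inner_smul_left]
      have h1 := neg_abs_le ⟪w, v⟫
      have h2 := abs_real_inner_le_norm w v
      nlinarith [norm_nonneg v, norm_nonneg w, real_inner_self_eq_norm_sq v]
    · rw [inner_neg_left, neg_nonpos]
      rw [inner_add_left, real_inner_smul_left, real_inner_smul_left]
      have h1 := neg_abs_le ⟪v, w⟫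
      have h2 := abs_real_inner_le_norm v w
      nlinarith [norm_nonneg v, norm_nonneg w, real_inner_self_eq_norm_sq w,
        real_inner_comm v w]

lemma far_away (r : ℝ) (hr : 0 < r) (x y : EuclideanSpace ℝ (Fin 2))
    (hx : x ≠ 0) (hy : ‖y‖ = r) (hxy : 0 ≤ ⟪x, y⟫) : r < ‖x + y‖ := by
  have hx' : 0 < ‖x‖ := norm_pos_iff.mpr hx
  have h2 : ‖x + y‖ ^ 2 = ‖x‖ ^ 2 + 2 * ⟪x, y⟫ + ‖y‖ ^ 2 := norm_add_sq_real x y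
  nlinarith [norm_nonneg (x + y)]

/-- Two equal disks cannot cover a third equal disk with a different center:
if the closed disk of radius `r > 0` around `c` is contained in the union of
the closed disks of radius `r` around `a` and `b`, then `c = a` or `c = b`. -/
theorem closedBall_subset_union_closedBall
    (r : ℝ) (hr : 0 < r)
    (a b c : EuclideanSpace ℝ (Fin 2))
    (h : Metric.closedBall c r ⊆ Metric.closedBall a r ∪ Metric.closedBall b r) :
    c = a ∨ c = b := by
  by_contra hne
  push_neg at hne
  obtain ⟨hca, hcb⟩ := hne
  have hv0 : a - c ≠ 0 := sub_ne_zero.mpr fun h' => hca h'.symm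
  have hw0 : b - c ≠ 0 := sub_ne_zero.mpr fun h' => hcb h'.symm
  obtain ⟨u, hu0, huv, huw⟩ := exists_dir (a - c) (b - c) hv0
  have hu' : 0 < ‖u‖ := norm_pos_iff.mpr hu0
  set y : EuclideanSpace ℝ (Fin 2) := (r / ‖u‖) • u with hy
  have hyn : ‖y‖ = r := by
    rw [hy, norm_smul, Real.norm_eq_abs, abs_of_pos (div_pos hr hu'),
      div_mul_cancel₀ _ (ne_of_gt hu')]
  have hp : c + y ∈ Metric.closedBall c r := by
    simp [Metric.mem_closedBall, dist_eq_norm, hyn]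
  have key : ∀ z : EuclideanSpace ℝ (Fin 2), z - c ≠ 0 → ⟪u, z - c⟫ ≤ 0 →
      c + y ∉ Metric.closedBall z r := by
    intro z hz hiz
    have hxy : 0 ≤ ⟪c - z, y⟫ := by
      rw [hy, real_inner_smul_right]
      have : ⟪c - z, u⟫ = -⟪u, z - c⟫ := by
        rw [real_inner_comm, ← inner_neg_right, neg_sub]
      rw [this]
      exact mul_nonneg (le_of_lt (div_pos hr hu')) (by linarith)
    have := far_away r hr (c - z) y (by simpa [sub_ne_zero] using fun h' => hz (by rw [h']; simp)) hyn hxy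
    simp only [Metric.mem_closedBall, dist_eq_norm, not_le]
    have heq : c + y - z = (c - z) + y := by abel
    rw [heq]
    exact this
  rcases h hp with h1 | h1
  · exact key a hv0 huv h1
  · exact key b hw0 huw h1
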